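/- arXiv:math/0304009 — 3 statements merged into one kernel-verified Lean document; each statement's English description precedes it below -/
import Mathlib

section
/- (Powers–Størmer inequality, matrix version) If a and b are positive semidefinite n×n complex matrices, then ‖a − b‖_HS² ≤ ‖a² − b²‖₁, where ‖x‖_HS² = Tr(x*x) is the Hilbert–Schmidt norm and ‖x‖₁ = Tr(|x|) is the trace norm. -/
open Matrix
open scoped ComplexOrder

/-- The square root of a positive semidefinite matrix (Mathlib's former `Matrix.PosSemidef.sqrt`). -/
noncomputable def Matrix.PosSemidef.sqrt {n : Type*} [Fintype n] [DecidableEq n]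
    {A : Matrix n n ℂ} (hA : A.PosSemidef) : Matrix n n ℂ :=
  (hA.1.eigenvectorUnitary : Matrix n n ℂ) *
    diagonal ((↑) ∘ (Real.sqrt) ∘ hA.1.eigenvalues) * (star (hA.1.eigenvectorUnitary : Matrix n n ℂ))

section PowersStormerSqrt
open scoped MatrixOrder

lemma Matrix.PosSemidef.sqrt_eq_cfcSqrt {n : ℕ} {A : Matrix (Fin n) (Fin n) ℂ}
    (hA : A.PosSemidef) : hA.sqrt = CFC.sqrt A := by
  have h0 : 0 ≤ A := nonneg_iff_posSemidef.mpr hA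
  rw [CFC.sqrt_eq_cfc, cfc_nnreal_eq_real _ A h0, hA.1.cfc_eq, IsHermitian.cfc,
    Unitary.conjStarAlgAut_apply, Matrix.PosSemidef.sqrt]
  congr 3
  funext i
  simp only [Function.comp_apply, Real.coe_sqrt, Real.coe_toNNReal',
    max_eq_left (hA.eigenvalues_nonneg i)]
  rfl

lemma Matrix.PosSemidef.sqrt_mul_self {n : ℕ} {A : Matrix (Fin n) (Fin n) ℂ}
    (hA : A.PosSemidef) : hA.sqrt * hA.sqrt = A := by
  rw [hA.sqrt_eq_cfcSqrt]
  exact CFC.sqrt_mul_sqrt_self A (nonneg_iff_posSemidef.mpr hA)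

lemma Matrix.PosSemidef.posSemidef_sqrt {n : ℕ} {A : Matrix (Fin n) (Fin n) ℂ}
    (hA : A.PosSemidef) : hA.sqrt.PosSemidef := by
  rw [hA.sqrt_eq_cfcSqrt]
  exact nonneg_iff_posSemidef.mp (CFC.sqrt_nonneg A)

lemma Matrix.PosSemidef.eq_sqrt_of_sq_eq {n : ℕ} {A : Matrix (Fin n) (Fin n) ℂ}
    (hA : A.PosSemidef) {B : Matrix (Fin n) (Fin n) ℂ} (hB : B.PosSemidef) (hAB : A ^ 2 = B) :
    A = hB.sqrt := by
  rw [hB.sqrt_eq_cfcSqrt]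
  exact (CFC.sqrt_unique (by rw [← pow_two]; exact hAB) (nonneg_iff_posSemidef.mpr hA)).symm

end PowersStormerSqrt

namespace PowersStormerAux

variable {n : ℕ}

/-- Functional calculus for a Hermitian matrix via its spectral decomposition. -/
noncomputable def fc {h : Matrix (Fin n) (Fin n) ℂ} (hh : h.IsHermitian) (f : ℝ → ℝ) :
    Matrix (Fin n) (Fin n) ℂ :=
  (hh.eigenvectorUnitary : Matrix (Fin n) (Fin n) ℂ) *
    diagonal (fun i => (f (hh.eigenvalues i) : ℂ)) *
    star (hh.eigenvectorUnitary : Matrix (Fin n) (Fin n) ℂ)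

variable {h : Matrix (Fin n) (Fin n) ℂ} (hh : h.IsHermitian)

lemma star_U_mul_U :
    star (hh.eigenvectorUnitary : Matrix (Fin n) (Fin n) ℂ) *
      (hh.eigenvectorUnitary : Matrix (Fin n) (Fin n) ℂ) = 1 :=
  mem_unitaryGroup_iff'.mp hh.eigenvectorUnitary.2

lemma U_mul_star_U :
    (hh.eigenvectorUnitary : Matrix (Fin n) (Fin n) ℂ) *
      star (hh.eigenvectorUnitary : Matrix (Fin n) (Fin n) ℂ) = 1 :=
  mem_unitaryGroup_iff.mp hh.eigenvectorUnitary.2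

lemma fc_mul (f g : ℝ → ℝ) :
    fc hh f * fc hh g = fc hh (fun x => f x * g x) := by
  set U := (hh.eigenvectorUnitary : Matrix (Fin n) (Fin n) ℂ)
  have hUU : star U * U = 1 := star_U_mul_U hh
  calc U * diagonal (fun i => (f (hh.eigenvalues i) : ℂ)) * star U *
        (U * diagonal (fun i => (g (hh.eigenvalues i) : ℂ)) * star U)
      = U * (diagonal (fun i => (f (hh.eigenvalues i) : ℂ)) * (star U * U) *
        diagonal (fun i => (g (hh.eigenvalues i) : ℂ))) * star U := by
        simp only [Matrix.mul_assoc]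
    _ = fc hh (fun x => f x * g x) := by
        rw [hUU, Matrix.mul_one, diagonal_mul_diagonal, fc]
        push_cast
        rfl

lemma fc_add (f g : ℝ → ℝ) :
    fc hh f + fc hh g = fc hh (fun x => f x + g x) := by
  simp only [fc, ← Matrix.add_mul, ← Matrix.mul_add]
  rw [diagonal_add]
  congr 1
  funext i
  push_cast
  rfl

lemma fc_sub (f g : ℝ → ℝ) :
    fc hh f - fc hh g = fc hh (fun x => f x - g x) := by
  simp only [fc, ← Matrix.sub_mul, ← Matrix.mul_sub]
  rw [diagonal_sub]
  congr 1
  funext i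
  push_cast
  rfl

lemma fc_congr {f g : ℝ → ℝ} (hfg : ∀ x, f x = g x) : fc hh f = fc hh g := by
  have : f = g := funext hfg
  rw [this]

lemma fc_one : fc hh (fun _ => 1) = 1 := by
  rw [fc]
  simp only [Complex.ofReal_one]
  rw [diagonal_one, Matrix.mul_one, U_mul_star_U hh]

lemma fc_id : fc hh (fun x => x) = h := by
  rw [fc]
  conv_rhs => rw [hh.spectral_theorem]
  rfl

lemma fc_posSemidef {f : ℝ → ℝ} (hf : ∀ x, 0 ≤ f x) : (fc hh f).PosSemidef := by
  have hdg : PosSemidef (diagonal (fun i => (f (hh.eigenvalues i) : ℂ))) :=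
    posSemidef_diagonal_iff.mpr fun i => by exact_mod_cast hf _
  have := hdg.mul_mul_conjTranspose_same
    (hh.eigenvectorUnitary : Matrix (Fin n) (Fin n) ℂ)
  rwa [← Matrix.star_eq_conjTranspose] at this

lemma fc_zero : fc hh (fun _ => 0) = 0 := by
  rw [fc]
  simp

/-- The trace of a positive semidefinite matrix is nonnegative. -/
lemma psd_trace_nonneg {X : Matrix (Fin n) (Fin n) ℂ} (hX : X.PosSemidef) :
    0 ≤ X.trace := by
  exact hX.trace_nonneg

/-- The trace of a product of two positive semidefinite matrices is nonnegative. -/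
lemma psd_trace_mul_nonneg {X Y : Matrix (Fin n) (Fin n) ℂ}
    (hX : X.PosSemidef) (hY : Y.PosSemidef) : 0 ≤ (X * Y).trace := by
  have hs := hX.sqrt_mul_self
  have h1 : (hX.sqrt * Y * hX.sqrt).trace = (X * Y).trace := by
    rw [trace_mul_cycle, hs]
  rw [← h1]
  refine psd_trace_nonneg ?_
  have := hY.mul_mul_conjTranspose_same hX.sqrt
  rwa [hX.posSemidef_sqrt.1.eq] at this

lemma re_nonneg_of_nonneg {z : ℂ} (h : 0 ≤ z) : 0 ≤ z.re := by
  have := Complex.le_def.mp h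
  simpa using this.1

/-- sign function -/
noncomputable def sgn (x : ℝ) : ℝ := if x < 0 then -1 else if 0 < x then 1 else 0

lemma sgn_mul_self (x : ℝ) : sgn x * x = |x| := by
  rw [sgn]
  rcases lt_trichotomy x 0 with hx | hx | hx
  · rw [if_pos hx, abs_of_neg hx]; ring
  · simp [hx]
  · rw [if_neg (not_lt.mpr hx.le), if_pos hx, abs_of_pos hx]; ring

lemma one_sub_sgn_nonneg (x : ℝ) : 0 ≤ 1 - sgn x := by
  rw [sgn]; split_ifs <;> norm_num

lemma one_add_sgn_nonneg (x : ℝ) : 0 ≤ 1 + sgn x := by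
  rw [sgn]; split_ifs <;> norm_num

/-- positive part function -/
noncomputable def pp (x : ℝ) : ℝ := (|x| + x) / 2
/-- negative part function -/
noncomputable def np (x : ℝ) : ℝ := (|x| - x) / 2

lemma pp_nonneg (x : ℝ) : 0 ≤ pp x := by
  have := neg_abs_le x; rw [pp]; linarith

lemma np_nonneg (x : ℝ) : 0 ≤ np x := by
  have := le_abs_self x; rw [np]; linarith

lemma pp_sub_np (x : ℝ) : pp x - np x = x := by rw [pp, np]; ring

lemma pp_add_np (x : ℝ) : pp x + np x = |x| := by rw [pp, np]; ring

lemma pp_mul_np (x : ℝ) : pp x * np x = 0 := by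
  have h := abs_mul_abs_self x
  rw [pp, np]; nlinarith

lemma np_mul_pp (x : ℝ) : np x * pp x = 0 := by
  have h := pp_mul_np x; linarith [mul_comm (np x) (pp x), h]

lemma sq_eq_pp_sq_add_np_sq (x : ℝ) : x * x = pp x * pp x + np x * np x := by
  have h := abs_mul_abs_self x
  rw [pp, np]; nlinarith

end PowersStormerAux

open PowersStormerAux

/-- The Hilbert–Schmidt norm `‖x‖_HS = √(Tr(x* x))` of a complex matrix. -/
noncomputable def hsNorm {n : ℕ} (x : Matrix (Fin n) (Fin n) ℂ) : ℝ :=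
  Real.sqrt ((xᴴ * x).trace.re)

/-- The trace norm `‖x‖₁ = Tr(|x|) = Tr(√(x* x))` of a complex matrix. -/
noncomputable def traceNorm {n : ℕ} (x : Matrix (Fin n) (Fin n) ℂ) : ℝ :=
  ((Matrix.posSemidef_conjTranspose_mul_self x).sqrt).trace.re

/-- Powers–Størmer inequality: `‖a − b‖_HS² ≤ ‖a² − b²‖₁` for positive semidefinite
matrices `a`, `b`. -/
theorem powers_stormer {n : ℕ} (a b : Matrix (Fin n) (Fin n) ℂ)
    (ha : a.PosSemidef) (hb : b.PosSemidef) :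
    hsNorm (a - b) ^ 2 ≤ traceNorm (a * a - b * b) := by
  set c : Matrix (Fin n) (Fin n) ℂ := a - b with hc_def
  have hc : c.IsHermitian := ha.1.sub hb.1
  set d : Matrix (Fin n) (Fin n) ℂ := a * a - b * b with hd_def
  have hd : d.IsHermitian := by
    have h1 : (a * a).IsHermitian := by
      rw [Matrix.IsHermitian, conjTranspose_mul, ha.1.eq]
    have h2 : (b * b).IsHermitian := by
      rw [Matrix.IsHermitian, conjTranspose_mul, hb.1.eq]
    exact h1.sub h2
  -- matrices from functional calculus of c
  set P := fc hc pp with hP_def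
  set N := fc hc np with hN_def
  set u := fc hc sgn with hu_def
  set m := fc hc (fun x => |x|) with hm_def
  -- matrices from functional calculus of d
  set Dp := fc hd pp with hDp_def
  set Dm := fc hd np with hDm_def
  set Dabs := fc hd (fun x => |x|) with hDabs_def
  -- basic facts
  have hP_psd : P.PosSemidef := fc_posSemidef hc pp_nonneg
  have hN_psd : N.PosSemidef := fc_posSemidef hc np_nonneg
  have hDp_psd : Dp.PosSemidef := fc_posSemidef hd pp_nonneg
  have hDm_psd : Dm.PosSemidef := fc_posSemidef hd np_nonneg
  have hDabs_psd : Dabs.PosSemidef := fc_posSemidef hd (fun x => abs_nonneg x)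
  have h1u_psd : (1 - u).PosSemidef := by
    rw [hu_def, ← fc_one hc, fc_sub]
    exact fc_posSemidef hc one_sub_sgn_nonneg
  have h1u'_psd : (1 + u).PosSemidef := by
    rw [hu_def, ← fc_one hc, fc_add]
    exact fc_posSemidef hc one_add_sgn_nonneg
  -- algebraic identities
  have hPN : P * N = 0 := by
    rw [hP_def, hN_def, fc_mul]
    rw [fc_congr hc pp_mul_np, fc_zero]
  have hNP : N * P = 0 := by
    rw [hP_def, hN_def, fc_mul]
    rw [fc_congr hc np_mul_pp, fc_zero]
  have hPNc : P - N = c := by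
    rw [hP_def, hN_def, fc_sub, fc_congr hc pp_sub_np, fc_id]
  have hPNm : P + N = m := by
    rw [hP_def, hN_def, hm_def, fc_add, fc_congr hc pp_add_np]
  have hDpm : Dp - Dm = d := by
    rw [hDp_def, hDm_def, fc_sub, fc_congr hd pp_sub_np, fc_id]
  have hDabs_eq : Dp + Dm = Dabs := by
    rw [hDp_def, hDm_def, hDabs_def, fc_add, fc_congr hd pp_add_np]
  have hum : u * c = m := by
    have h1 : fc hc sgn * fc hc (fun x => x) = fc hc (fun x => |x|) := by
      rw [fc_mul]; exact fc_congr hc sgn_mul_self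
    rw [fc_id] at h1
    rw [hu_def, hm_def]; exact h1
  have hmu : c * u = m := by
    have h1 : fc hc (fun x => x) * fc hc sgn = fc hc (fun x => |x|) := by
      rw [fc_mul]
      refine fc_congr hc fun x => ?_
      rw [mul_comm, sgn_mul_self]
    rw [fc_id] at h1
    rw [hu_def, hm_def]; exact h1
  have hcc : c * c = P * P + N * N := by
    have h1 : fc hc (fun x => x) * fc hc (fun x => x)
        = fc hc pp * fc hc pp + fc hc np * fc hc np := by
      rw [fc_mul, fc_mul, fc_mul, fc_add]
      exact fc_congr hc sq_eq_pp_sq_add_np_sq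
    rw [fc_id] at h1
    rw [hP_def, hN_def]; exact h1
  -- Dabs is the square root of dᴴ * d
  have hDabs_sqrt : Dabs = (Matrix.posSemidef_conjTranspose_mul_self d).sqrt := by
    refine hDabs_psd.eq_sqrt_of_sq_eq _ ?_
    have h1 : fc hd (fun x => |x|) * fc hd (fun x => |x|)
        = fc hd (fun x => x) * fc hd (fun x => x) := by
      rw [fc_mul, fc_mul]
      exact fc_congr hd fun x => abs_mul_abs_self x
    rw [fc_id] at h1
    rw [pow_two, hDabs_def, h1, hd.eq]
  -- trace inequality step 1 : re Tr(u*d) ≤ re Tr(Dabs)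
  have key1 : ((u * d).trace).re ≤ Dabs.trace.re := by
    have hident : Dabs - u * d = (1 - u) * Dp + (1 + u) * Dm := by
      rw [← hDabs_eq, ← hDpm]
      noncomm_ring
    have ht1 : 0 ≤ ((1 - u) * Dp).trace := psd_trace_mul_nonneg h1u_psd hDp_psd
    have ht2 : 0 ≤ ((1 + u) * Dm).trace := psd_trace_mul_nonneg h1u'_psd hDm_psd
    have : 0 ≤ (Dabs - u * d).trace := by
      rw [hident, trace_add]
      exact add_nonneg ht1 ht2
    rw [trace_sub] at this
    have := re_nonneg_of_nonneg this
    rw [Complex.sub_re] at this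
    linarith
  -- expansion of d
  have hd_expand : d = b * c + c * b + c * c := by
    rw [hd_def, hc_def]
    noncomm_ring
  -- trace identity step 2
  have key2 : (u * d).trace = (b * P).trace + (b * N).trace
      + ((b * P).trace + (b * N).trace) + (P * P).trace - (N * N).trace := by
    have e1 : (u * (b * c)).trace = (b * m).trace := by
      rw [trace_mul_comm, Matrix.mul_assoc, hmu]
    have e2 : (u * (c * b)).trace = (b * m).trace := by
      rw [← Matrix.mul_assoc, hum, trace_mul_comm]
    have e3 : (u * (c * c)).trace = (P * P).trace - (N * N).trace := by
      rw [← Matrix.mul_assoc, hum, ← hPNm, ← hPNc]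
      have : (P + N) * (P - N) = P * P - N * N := by
        rw [Matrix.add_mul, Matrix.mul_sub, Matrix.mul_sub, hPN, hNP]
        noncomm_ring
      rw [this, trace_sub]
    have ebm : (b * m).trace = (b * P).trace + (b * N).trace := by
      rw [← hPNm, Matrix.mul_add, trace_add]
    rw [hd_expand, Matrix.mul_add, Matrix.mul_add, trace_add, trace_add, e1, e2, e3,
      ebm]
    ring
  -- nonnegativity facts
  have hbP : 0 ≤ ((b * P).trace).re :=
    re_nonneg_of_nonneg (psd_trace_mul_nonneg hb hP_psd)
  have hNa : 0 ≤ ((N * a).trace).re :=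
    re_nonneg_of_nonneg (psd_trace_mul_nonneg hN_psd ha)
  -- step 3 : Tr(N*N) ≤ Tr(b*N)
  have key3 : (b * N).trace - (N * N).trace = (N * a).trace := by
    have h1 : N * a = N * b + N * c := by
      rw [hc_def, Matrix.mul_sub]
      abel
    have h2 : N * c = N * P - N * N := by rw [← hPNc, Matrix.mul_sub]
    rw [h1, h2, hNP, trace_add, trace_sub, trace_zero, trace_mul_comm b N]
    ring
  -- assemble real parts
  have key2re : ((u * d).trace).re = ((b * P).trace).re + ((b * N).trace).re
      + (((b * P).trace).re + ((b * N).trace).re) + ((P * P).trace).re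
      - ((N * N).trace).re := by
    rw [key2]; simp [Complex.add_re, Complex.sub_re]
  have key3re : ((b * N).trace).re - ((N * N).trace).re = ((N * a).trace).re := by
    rw [← Complex.sub_re, key3]
  have hccre : ((c * c).trace).re = ((P * P).trace).re + ((N * N).trace).re := by
    rw [hcc, trace_add]; simp [Complex.add_re]
  -- final assembly
  have main : ((c * c).trace).re ≤ Dabs.trace.re := by
    have := key1
    rw [key2re] at this
    linarith
  -- translate to hsNorm and traceNorm
  have hch : cᴴ = c := hc.eq
  have hs_eq : hsNorm (a - b) ^ 2 = ((c * c).trace).re := by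
    rw [hsNorm, ← hc_def, hch]
    refine Real.sq_sqrt ?_
    have : (c * c).PosSemidef := by
      have := Matrix.posSemidef_conjTranspose_mul_self c
      rwa [hch] at this
    exact re_nonneg_of_nonneg (psd_trace_nonneg this)
  have tn_eq : traceNorm (a * a - b * b) = Dabs.trace.re := by
    rw [traceNorm, ← hd_def, ← hDabs_sqrt]
  rw [hs_eq, tn_eq]
  exact main
end

section
/- Let P be a projection in M_n(ℂ) and a ∈ M_n(ℂ). Then the operator norm of the commutator satisfies ‖Pa − aP‖ = max{ ‖Paa*P − PaPa*P‖^{1/2}, ‖Pa*aP − Pa*PaP‖^{1/2} }. -/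
open Matrix

noncomputable def opNorm {n : ℕ} (x : Matrix (Fin n) (Fin n) ℂ) : ℝ :=
  ‖Matrix.toEuclideanCLM (𝕜 := ℂ) (n := Fin n) x‖

section aux

variable {E : Type*} [NormedAddCommGroup E] [InnerProductSpace ℂ E] [CompleteSpace E]

open ContinuousLinearMap

lemma proj_norm_le_one (p : E →L[ℂ] E) (hp : star p = p) (hp2 : p * p = p) : ‖p‖ ≤ 1 := by
  have h := CStarRing.norm_star_mul_self (x := p)
  rw [hp, hp2] at h
  nlinarith [norm_nonneg p]

lemma key_le (p A : E →L[ℂ] E) (hp : star p = p) (hp2 : p * p = p) :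
    ‖p * A - A * p‖ ≤ max ‖p * A - p * A * p‖ ‖A * p - p * A * p‖ := by
  set u := p * A - p * A * p with hu
  set v := A * p - p * A * p with hv
  set M := max ‖u‖ ‖v‖ with hM
  have hM0 : 0 ≤ M := le_trans (norm_nonneg u) (le_max_left _ _)
  have hpu : p * u = u := by
    simp only [hu, mul_sub, ← mul_assoc, hp2]
  have hup : u * p = 0 := by
    simp only [hu, sub_mul, mul_assoc, hp2, sub_self]
  have hvp : v * p = v := by
    simp only [hv, sub_mul, mul_assoc, hp2]
  have hpv : p * v = 0 := by
    simp only [hv, mul_sub, ← mul_assoc, hp2, sub_self]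
  have hc : p * A - A * p = u - v := by rw [hu, hv]; abel
  rw [hc]
  refine opNorm_le_bound _ hM0 fun x => ?_
  have hinner : inner ℂ (u x) (v x) = (0 : ℂ) := by
    have h1 : u x = p (u x) := by rw [← ContinuousLinearMap.mul_apply, hpu]
    have h2 : p (v x) = 0 := by rw [← ContinuousLinearMap.mul_apply, hpv]; rfl
    rw [h1, ← hp, star_eq_adjoint, adjoint_inner_left, h2, inner_zero_right]
  have hsub : ((u - v) : E →L[ℂ] E) x = u x - v x := rfl
  have hcx : ‖(u - v) x‖ ^ 2 = ‖u x‖ ^ 2 + ‖v x‖ ^ 2 := by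
    rw [hsub, @norm_sub_sq ℂ, hinner]
    simp
  have hux : ‖u x‖ ≤ ‖u‖ * ‖x - p x‖ := by
    have : u (x - p x) = u x := by
      rw [map_sub, ← ContinuousLinearMap.mul_apply, hup]
      simp
    rw [← this]
    exact le_opNorm u _
  have hvx : ‖v x‖ ≤ ‖v‖ * ‖p x‖ := by
    have : v (p x) = v x := by rw [← ContinuousLinearMap.mul_apply, hvp]
    rw [← this]
    exact le_opNorm v _
  have hpyth : ‖p x‖ ^ 2 + ‖x - p x‖ ^ 2 = ‖x‖ ^ 2 := by
    have hpx0 : p (x - p x) = 0 := by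
      rw [map_sub, ← ContinuousLinearMap.mul_apply p p, hp2, sub_self]
    have horth : inner ℂ (p x) (x - p x) = (0 : ℂ) := by
      nth_rewrite 1 [← hp]
      rw [star_eq_adjoint, adjoint_inner_left, hpx0, inner_zero_right]
    have hx : x = p x + (x - p x) := by abel
    calc ‖p x‖ ^ 2 + ‖x - p x‖ ^ 2
        = ‖p x + (x - p x)‖ ^ 2 := by
          rw [@norm_add_sq ℂ, horth]; simp
      _ = ‖x‖ ^ 2 := by rw [← hx]
  have key : ‖(u - v) x‖ ^ 2 ≤ (M * ‖x‖) ^ 2 := by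
    have h1 : ‖u x‖ ^ 2 ≤ ‖u‖ ^ 2 * ‖x - p x‖ ^ 2 := by
      rw [← mul_pow]; exact pow_le_pow_left₀ (norm_nonneg _) hux 2
    have h2 : ‖v x‖ ^ 2 ≤ ‖v‖ ^ 2 * ‖p x‖ ^ 2 := by
      rw [← mul_pow]; exact pow_le_pow_left₀ (norm_nonneg _) hvx 2
    have hu2 : ‖u‖ ^ 2 ≤ M ^ 2 := pow_le_pow_left₀ (norm_nonneg _) (le_max_left _ _) 2
    have hv2 : ‖v‖ ^ 2 ≤ M ^ 2 := pow_le_pow_left₀ (norm_nonneg _) (le_max_right _ _) 2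
    have hq1 : (0:ℝ) ≤ ‖x - p x‖ ^ 2 := sq_nonneg _
    have hq2 : (0:ℝ) ≤ ‖p x‖ ^ 2 := sq_nonneg _
    calc ‖(u - v) x‖ ^ 2 = ‖u x‖ ^ 2 + ‖v x‖ ^ 2 := hcx
      _ ≤ ‖u‖ ^ 2 * ‖x - p x‖ ^ 2 + ‖v‖ ^ 2 * ‖p x‖ ^ 2 := add_le_add h1 h2
      _ ≤ M ^ 2 * ‖x - p x‖ ^ 2 + M ^ 2 * ‖p x‖ ^ 2 := by
          gcongr
      _ = M ^ 2 * (‖p x‖ ^ 2 + ‖x - p x‖ ^ 2) := by ring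
      _ = (M * ‖x‖) ^ 2 := by rw [hpyth]; ring
  exact le_of_pow_le_pow_left₀ two_ne_zero (by positivity) key

lemma key_eq (p A : E →L[ℂ] E) (hp : star p = p) (hp2 : p * p = p) :
    ‖p * A - A * p‖ = max ‖p * A - p * A * p‖ ‖A * p - p * A * p‖ := by
  set u := p * A - p * A * p with hu
  set v := A * p - p * A * p with hv
  set c := p * A - A * p with hc
  refine le_antisymm (key_le p A hp hp2) (max_le ?_ ?_)
  · -- u = p * c * (1 - p)
    have h1p : star (1 - p) = 1 - p := by rw [star_sub, hp, star_one]
    have h1p2 : (1 - p) * (1 - p) = 1 - p := by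
      rw [sub_mul, mul_sub, mul_sub, hp2, one_mul, mul_one]; abel
    have hppr : ∀ x : E →L[ℂ] E, x * p * p = x * p := fun x => by rw [mul_assoc, hp2]
    have heq : u = p * c * (1 - p) := by
      simp only [hu, hc, mul_sub, sub_mul, mul_one, one_mul, ← mul_assoc, hp2, hppr]
      abel
    calc ‖u‖ = ‖p * c * (1 - p)‖ := by rw [heq]
      _ ≤ ‖p * c‖ * ‖1 - p‖ := norm_mul_le _ _
      _ ≤ ‖p‖ * ‖c‖ * ‖1 - p‖ := by gcongr; exact norm_mul_le _ _
      _ ≤ 1 * ‖c‖ * 1 := by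
          gcongr
          · exact proj_norm_le_one p hp hp2
          · exact proj_norm_le_one _ h1p h1p2
      _ = ‖c‖ := by ring
  · have h1p : star (1 - p) = 1 - p := by rw [star_sub, hp, star_one]
    have h1p2 : (1 - p) * (1 - p) = 1 - p := by
      rw [sub_mul, mul_sub, mul_sub, hp2, one_mul, mul_one]; abel
    have hppr : ∀ x : E →L[ℂ] E, x * p * p = x * p := fun x => by rw [mul_assoc, hp2]
    have heq : v = -((1 - p) * c * p) := by
      simp only [hv, hc, mul_sub, sub_mul, mul_one, one_mul, ← mul_assoc, hp2, hppr]
      abel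
    calc ‖v‖ = ‖(1 - p) * c * p‖ := by rw [heq, norm_neg]
      _ ≤ ‖(1 - p) * c‖ * ‖p‖ := norm_mul_le _ _
      _ ≤ ‖1 - p‖ * ‖c‖ * ‖p‖ := by gcongr; exact norm_mul_le _ _
      _ ≤ 1 * ‖c‖ * 1 := by
          gcongr
          · exact proj_norm_le_one _ h1p h1p2
          · exact proj_norm_le_one p hp hp2
      _ = ‖c‖ := by ring

lemma sqrt_norm_self_mul_star (T : E →L[ℂ] E) : Real.sqrt ‖T * star T‖ = ‖T‖ := by
  rw [CStarRing.norm_self_mul_star, Real.sqrt_mul_self (norm_nonneg _)]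

lemma sqrt_norm_star_mul_self (T : E →L[ℂ] E) : Real.sqrt ‖star T * T‖ = ‖T‖ := by
  rw [CStarRing.norm_star_mul_self, Real.sqrt_mul_self (norm_nonneg _)]

end aux

lemma sqrt_opNorm_mul_conjTranspose {n : ℕ} (U : Matrix (Fin n) (Fin n) ℂ) :
    Real.sqrt (opNorm (U * Uᴴ)) = opNorm U := by
  have h : opNorm (U * Uᴴ) = ‖(Matrix.toEuclideanCLM (𝕜 := ℂ) U) * star (Matrix.toEuclideanCLM (𝕜 := ℂ) U)‖ := by
    rw [opNorm, _root_.map_mul, ← Matrix.star_eq_conjTranspose, map_star]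
  rw [h, sqrt_norm_self_mul_star]
  rfl

lemma sqrt_opNorm_conjTranspose_mul {n : ℕ} (U : Matrix (Fin n) (Fin n) ℂ) :
    Real.sqrt (opNorm (Uᴴ * U)) = opNorm U := by
  have h : opNorm (Uᴴ * U) = ‖star (Matrix.toEuclideanCLM (𝕜 := ℂ) U) * (Matrix.toEuclideanCLM (𝕜 := ℂ) U)‖ := by
    rw [opNorm, _root_.map_mul, ← Matrix.star_eq_conjTranspose, map_star]
  rw [h, sqrt_norm_star_mul_self]
  rfl

/-- For a projection `P` and a matrix `a`, the operator norm of the commutator satisfies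
`‖Pa − aP‖ = max { ‖Paa*P − PaPa*P‖^{1/2}, ‖Pa*aP − Pa*PaP‖^{1/2} }`. -/
theorem commutator_op_norm {n : ℕ} (P a : Matrix (Fin n) (Fin n) ℂ)
    (hP : Pᴴ = P) (hP2 : P * P = P) :
    opNorm (P * a - a * P)
      = max (Real.sqrt (opNorm (P * a * aᴴ * P - P * a * P * aᴴ * P)))
          (Real.sqrt (opNorm (P * aᴴ * a * P - P * aᴴ * P * a * P))) := by
  have hstarP : star (Matrix.toEuclideanCLM (𝕜 := ℂ) P) = Matrix.toEuclideanCLM (𝕜 := ℂ) P := by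
    rw [← map_star, Matrix.star_eq_conjTranspose, hP]
  have hp2 : (Matrix.toEuclideanCLM (𝕜 := ℂ) P) * (Matrix.toEuclideanCLM (𝕜 := ℂ) P)
      = Matrix.toEuclideanCLM (𝕜 := ℂ) P := by
    rw [← _root_.map_mul, hP2]
  have h1 : opNorm (P * a - a * P)
      = max (opNorm (P * a - P * a * P)) (opNorm (a * P - P * a * P)) := by
    have h := key_eq (Matrix.toEuclideanCLM (𝕜 := ℂ) P) (Matrix.toEuclideanCLM (𝕜 := ℂ) a) hstarP hp2
    simp only [opNorm, map_sub, _root_.map_mul]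
    exact h
  have hppr : ∀ x : Matrix (Fin n) (Fin n) ℂ, x * P * P = x * P := fun x => by
    rw [_root_.mul_assoc, hP2]
  have hU : (P * a - P * a * P) * (P * a - P * a * P)ᴴ
      = P * a * aᴴ * P - P * a * P * aᴴ * P := by
    simp only [conjTranspose_sub, conjTranspose_mul, hP, mul_sub, sub_mul, ← _root_.mul_assoc,
      hP2, hppr]
    abel
  have hV : (a * P - P * a * P)ᴴ * (a * P - P * a * P)
      = P * aᴴ * a * P - P * aᴴ * P * a * P := by
    simp only [conjTranspose_sub, conjTranspose_mul, hP, mul_sub, sub_mul, ← _root_.mul_assoc,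
      hP2, hppr]
    abel
  rw [h1, ← hU, ← hV, sqrt_opNorm_mul_conjTranspose, sqrt_opNorm_conjTranspose_mul]
end

section
/- For positive real numbers p₁,…,p_k and q = Σ p_i, and any complex numbers (T_{ij}), the following estimate holds: Σ_{i,j} (1/q)|T_{ij}|² ((p_i p_j)^{1/2} − min{p_i, p_j}) ≤ (Σ_{i,j} (1/q)|T_{ij}|² p_i)^{1/2} · (Σ_{i,j} (1/q)|T_{ij}|² (p_i^{1/2} − p_j^{1/2})²)^{1/2}. -/
open scoped BigOperators

lemma ozawa_pointwise {a b : ℝ} (ha : 0 ≤ a) (hb : 0 ≤ b) :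
    Real.sqrt (a * b) - min a b ≤ Real.sqrt a * |Real.sqrt a - Real.sqrt b| := by
  have hab : Real.sqrt (a * b) = Real.sqrt a * Real.sqrt b := Real.sqrt_mul ha b
  rcases le_total a b with h | h
  · have h' : Real.sqrt a ≤ Real.sqrt b := Real.sqrt_le_sqrt h
    rw [min_eq_left h, abs_of_nonpos (sub_nonpos_of_le h')]
    nlinarith [Real.sq_sqrt ha, Real.sqrt_nonneg a, Real.sqrt_nonneg b]
  · have h' : Real.sqrt b ≤ Real.sqrt a := Real.sqrt_le_sqrt h
    rw [min_eq_right h, abs_of_nonneg (sub_nonneg_of_le h')]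
    nlinarith [Real.sq_sqrt hb, Real.sqrt_nonneg a, Real.sqrt_nonneg b]

/-- The key scalar Cauchy–Schwarz estimate from Ozawa's proof of the characterization
of amenable traces: for positive reals `p₁,…,p_k` with `q = Σ p_i` and complex numbers
`T_{ij}`,
`Σ_{i,j} (1/q)|T_{ij}|²((p_i p_j)^{1/2} − min{p_i,p_j})
  ≤ (Σ_{i,j} (1/q)|T_{ij}|² p_i)^{1/2} · (Σ_{i,j} (1/q)|T_{ij}|²(p_i^{1/2} − p_j^{1/2})²)^{1/2}`. -/
theorem ozawa_scalar_estimate {k : ℕ} (p : Fin k → ℝ) (hp : ∀ i, 0 < p i)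
    (q : ℝ) (hq : q = ∑ i, p i) (T : Fin k → Fin k → ℂ) :
    ∑ i, ∑ j, (1 / q) * ‖T i j‖ ^ 2
        * (Real.sqrt (p i * p j) - min (p i) (p j))
      ≤ Real.sqrt (∑ i, ∑ j, (1 / q) * ‖T i j‖ ^ 2 * p i)
        * Real.sqrt (∑ i, ∑ j, (1 / q) * ‖T i j‖ ^ 2
            * (Real.sqrt (p i) - Real.sqrt (p j)) ^ 2) := by
  have hq0 : 0 ≤ q := by
    rw [hq]; exact Finset.sum_nonneg fun i _ => (hp i).le
  set c : Fin k → Fin k → ℝ := fun i j => (1 / q) * ‖T i j‖ ^ 2 with hc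
  have hc0 : ∀ i j, 0 ≤ c i j := fun i j => by positivity
  set F : Fin k × Fin k → ℝ := fun x => c x.1 x.2 * p x.1 with hF
  set G : Fin k × Fin k → ℝ :=
    fun x => c x.1 x.2 * (Real.sqrt (p x.1) - Real.sqrt (p x.2)) ^ 2 with hG
  have hF0 : ∀ x, 0 ≤ F x := fun x => mul_nonneg (hc0 _ _) (hp _).le
  have hG0 : ∀ x, 0 ≤ G x := fun x => mul_nonneg (hc0 _ _) (sq_nonneg _)
  have key := Real.sum_sqrt_mul_sqrt_le (Finset.univ : Finset (Fin k × Fin k)) hF0 hG0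
  rw [Fintype.sum_prod_type (f := F), Fintype.sum_prod_type (f := G)] at key
  refine le_trans ?_ key
  rw [Fintype.sum_prod_type]
  refine Finset.sum_le_sum fun i _ => Finset.sum_le_sum fun j _ => ?_
  have hpt := ozawa_pointwise (hp i).le (hp j).le
  have heq : Real.sqrt (F (i, j)) * Real.sqrt (G (i, j))
      = c i j * (Real.sqrt (p i) * |Real.sqrt (p i) - Real.sqrt (p j)|) := by
    show Real.sqrt (c i j * p i)
        * Real.sqrt (c i j * (Real.sqrt (p i) - Real.sqrt (p j)) ^ 2) = _
    rw [Real.sqrt_mul (hc0 _ _), Real.sqrt_mul (hc0 _ _), Real.sqrt_sq_eq_abs,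
      mul_mul_mul_comm, Real.mul_self_sqrt (hc0 _ _)]
  rw [heq]
  exact mul_le_mul_of_nonneg_left hpt (hc0 _ _)
end
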